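/- Let P ⊂ ℝ² be a finite point set and lay a grid of cells of side length 7 (semi-open squares). Call a cell full if it contains at least 4 points of P. Let UDG(P) be the graph on P with edges between points at distance ≤ 1. Then any path in UDG(P) that begins at a point in a cell C and reaches a point outside the 3×3 block of cells centered at C must pass through a point lying in a full cell of C's block other than C itself. -/

import Mathlib

open Real

/-- The semi-open grid cell of side length 7 with integer grid coordinates `(a, b)`. -/
def cell (a b : ℤ) : Set (EuclideanSpace ℝ (Fin 2)) :=
  {x | 7 * (a : ℝ) ≤ x 0 ∧ x 0 < 7 * (a : ℝ) + 7 ∧ 7 * (b : ℝ) ≤ x 1 ∧ x 1 < 7 * (b : ℝ) + 7}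

lemma exists_last_below (f : ℕ → ℝ) (lo hi : ℕ) (c : ℝ)
    (hstep : ∀ i, lo ≤ i → i < hi → |f (i+1) - f i| ≤ 1)
    (hlo : f lo < c) (hhi : c ≤ f hi) (hlohi : lo ≤ hi) :
    ∃ t, lo ≤ t ∧ t < hi ∧ c - 1 ≤ f t ∧ f t < c ∧
      ∀ i, lo ≤ i → i < hi → f i < c → i ≤ t := by
  classical
  have hne : lo < hi := lt_of_le_of_ne hlohi (by rintro rfl; linarith)
  set S : Finset ℕ := (Finset.range hi).filter (fun i => lo ≤ i ∧ f i < c) with hSdef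
  have hSne : S.Nonempty := ⟨lo, by simp [hSdef, hne, hlo]⟩
  set t := S.max' hSne with ht
  have htS : t ∈ S := S.max'_mem hSne
  rw [hSdef, Finset.mem_filter, Finset.mem_range] at htS
  have hmax : ∀ i, lo ≤ i → i < hi → f i < c → i ≤ t := by
    intro i h1 h2 h3
    exact S.le_max' i (by simp [hSdef, h1, h2, h3])
  have hnext : c ≤ f (t + 1) := by
    rcases eq_or_lt_of_le (Nat.succ_le_of_lt htS.1) with h | h
    · rw [show t + 1 = hi from h]; exact hhi
    · by_contra hcon
      push_neg at hcon
      have := hmax (t+1) (le_trans htS.2.1 (Nat.le_succ t)) h hcon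
      omega
  have hst := hstep t htS.2.1 htS.1
  rw [abs_le] at hst
  exact ⟨t, htS.2.1, htS.1, by linarith [hst.2], htS.2.2, hmax⟩

lemma exists_last_above (f : ℕ → ℝ) (lo hi : ℕ) (c : ℝ)
    (hstep : ∀ i, lo ≤ i → i < hi → |f (i+1) - f i| ≤ 1)
    (hlo : c ≤ f lo) (hhi : f hi < c) (hlohi : lo ≤ hi) :
    ∃ t, lo ≤ t ∧ t < hi ∧ c ≤ f t ∧ f t < c + 1 ∧
      ∀ i, lo ≤ i → i < hi → c ≤ f i → i ≤ t := by
  classical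
  have hne : lo < hi := lt_of_le_of_ne hlohi (by rintro rfl; linarith)
  set S : Finset ℕ := (Finset.range hi).filter (fun i => lo ≤ i ∧ c ≤ f i) with hSdef
  have hSne : S.Nonempty := ⟨lo, by simp [hSdef, hne, hlo]⟩
  set t := S.max' hSne with ht
  have htS : t ∈ S := S.max'_mem hSne
  rw [hSdef, Finset.mem_filter, Finset.mem_range] at htS
  have hmax : ∀ i, lo ≤ i → i < hi → c ≤ f i → i ≤ t := by
    intro i h1 h2 h3
    exact S.le_max' i (by simp [hSdef, h1, h2, h3])
  have hnext : f (t + 1) < c := by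
    rcases eq_or_lt_of_le (Nat.succ_le_of_lt htS.1) with h | h
    · rw [show t + 1 = hi from h]; exact hhi
    · by_contra hcon
      push_neg at hcon
      have := hmax (t+1) (le_trans htS.2.1 (Nat.le_succ t)) h hcon
      omega
  have hst := hstep t htS.2.1 htS.1
  rw [abs_le] at hst
  exact ⟨t, htS.2.1, htS.1, htS.2.2, by linarith [hst.1], hmax⟩

section RowsOfSeven
variable (f g : ℕ → ℝ)

lemma rows_of_seven (m i0 : ℕ) (colLo : ℝ)
    (hg : ∀ i, i < m → |g (i+1) - g i| ≤ 1)
    (hgb : ∀ i, i < m → 0 ≤ g i ∧ g i < 21)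
    (hfcol : ∀ i, i0 < i → i < m → colLo ≤ f i ∧ f i < colLo + 7)
    (t : Fin 7 → ℕ)
    (ht : ∀ s : Fin 7, i0 < t s ∧ t s < m ∧ colLo + (s : ℕ) ≤ f (t s) ∧
      f (t s) < colLo + (s : ℕ) + 1) :
    ∃ r : ℕ, r < 3 ∧ ∃ T : Finset ℕ, 4 ≤ T.card ∧
      (∀ u ∈ T, u < m ∧ colLo ≤ f u ∧ f u < colLo + 7 ∧
        7 * (r : ℝ) ≤ g u ∧ g u < 7 * (r : ℝ) + 7) ∧
      (∀ u ∈ T, ∀ v ∈ T, f u = f v → g u = g v → u = v) := by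
  classical
  -- the seven column points
  set S : Finset ℕ := Finset.univ.image t with hSdef
  have htinj : Function.Injective t := by
    intro s s' h
    have h1 := (ht s).2.2
    have h2 := (ht s').2.2
    rw [h] at h1
    have e1 : ((s : ℕ) : ℝ) < (s' : ℕ) + 1 := by linarith [h1.1, h2.2]
    have e2 : ((s' : ℕ) : ℝ) < (s : ℕ) + 1 := by linarith [h1.2, h2.1]
    have e1' : (s : ℕ) < (s' : ℕ) + 1 := by exact_mod_cast e1
    have e2' : (s' : ℕ) < (s : ℕ) + 1 := by exact_mod_cast e2
    exact Fin.ext (by omega)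
  have hScard : S.card = 7 := by
    rw [hSdef, Finset.card_image_of_injective _ htinj, Finset.card_univ, Fintype.card_fin]
  have hSmem : ∀ u ∈ S, i0 < u ∧ u < m := by
    intro u hu
    rw [hSdef, Finset.mem_image] at hu
    obtain ⟨s, -, rfl⟩ := hu
    exact ⟨(ht s).1, (ht s).2.1⟩
  have hSfinj : ∀ u ∈ S, ∀ v ∈ S, f u = f v → u = v := by
    intro u hu v hv hfe
    rw [hSdef, Finset.mem_image] at hu hv
    obtain ⟨s, -, rfl⟩ := hu
    obtain ⟨s', -, rfl⟩ := hv
    have h1 := (ht s).2.2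
    have h2 := (ht s').2.2
    rw [hfe] at h1
    have e1 : ((s : ℕ) : ℝ) < (s' : ℕ) + 1 := by linarith [h1.1, h2.2]
    have e2 : ((s' : ℕ) : ℝ) < (s : ℕ) + 1 := by linarith [h1.2, h2.1]
    have e1' : (s : ℕ) < (s' : ℕ) + 1 := by exact_mod_cast e1
    have e2' : (s' : ℕ) < (s : ℕ) + 1 := by exact_mod_cast e2
    exact congrArg t (Fin.ext (by omega))
  -- packaging
  have hdone : ∀ r : ℕ, r < 3 → ∀ T : Finset ℕ, 4 ≤ T.card →
      (∀ u ∈ T, i0 < u ∧ u < m ∧ 7 * (r : ℝ) ≤ g u ∧ g u < 7 * (r : ℝ) + 7) →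
      (∀ u ∈ T, ∀ v ∈ T, f u = f v → g u = g v → u = v) →
      ∃ r : ℕ, r < 3 ∧ ∃ T : Finset ℕ, 4 ≤ T.card ∧
      (∀ u ∈ T, u < m ∧ colLo ≤ f u ∧ f u < colLo + 7 ∧
        7 * (r : ℝ) ≤ g u ∧ g u < 7 * (r : ℝ) + 7) ∧
      (∀ u ∈ T, ∀ v ∈ T, f u = f v → g u = g v → u = v) := by
    intro r hr T hc hmemT hinjT
    refine ⟨r, hr, T, hc, fun u hu => ?_, hinjT⟩
    obtain ⟨h1, h2, h3, h4⟩ := hmemT u hu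
    obtain ⟨h5, h6⟩ := hfcol u h1 h2
    exact ⟨h2, h5, h6, h3, h4⟩
  by_cases hlow : ∃ u ∈ S, g u < 7
  · by_cases hhigh : ∃ v ∈ S, 14 ≤ g v
    · -- crossing case
      obtain ⟨u, huS, hu7⟩ := hlow
      obtain ⟨v, hvS, hv14⟩ := hhigh
      have hum := hSmem u huS
      have hvm := hSmem v hvS
      have hneuv : u ≠ v := by intro h; rw [h] at hu7; linarith
      have key : ∀ s : Fin 4, ∃ w, i0 < w ∧ w < m ∧
          7 + ((s : ℕ) : ℝ) ≤ g w ∧ g w < 7 + ((s : ℕ) : ℝ) + 1 := by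
        intro s
        have hs0 : (0 : ℝ) ≤ ((s : ℕ) : ℝ) := by positivity
        have hs3 : ((s : ℕ) : ℝ) ≤ 3 := by exact_mod_cast Nat.lt_succ_iff.mp s.isLt
        rcases Nat.lt_or_ge u v with huv | hvu
        · obtain ⟨w, hw1, hw2, hw3, hw4, -⟩ := exists_last_below g u v (8 + (s : ℕ))
            (fun i h1 h2 => hg i (lt_trans h2 hvm.2)) (by linarith) (by linarith)
            (le_of_lt huv)
          exact ⟨w, lt_of_lt_of_le hum.1 hw1, lt_trans hw2 hvm.2, by linarith, by linarith⟩
        · have hvu' : v < u := lt_of_le_of_ne hvu (Ne.symm hneuv)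
          obtain ⟨w, hw1, hw2, hw3, hw4, -⟩ := exists_last_above g v u (7 + (s : ℕ))
            (fun i h1 h2 => hg i (lt_trans h2 hum.2)) (by linarith) (by linarith)
            (le_of_lt hvu')
          exact ⟨w, lt_of_lt_of_le hvm.1 hw1, lt_trans hw2 hum.2, by linarith, by linarith⟩
      choose w hw using key
      have hwinj : Function.Injective w := by
        intro s s' h
        have h1 := hw s
        have h2 := hw s'
        rw [h] at h1
        have e1 : ((s : ℕ) : ℝ) < (s' : ℕ) + 1 := by linarith [h1.2.2.1, h2.2.2.2]
        have e2 : ((s' : ℕ) : ℝ) < (s : ℕ) + 1 := by linarith [h1.2.2.2, h2.2.2.1]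
        have e1' : (s : ℕ) < (s' : ℕ) + 1 := by exact_mod_cast e1
        have e2' : (s' : ℕ) < (s : ℕ) + 1 := by exact_mod_cast e2
        exact Fin.ext (by omega)
      refine hdone 1 (by norm_num) (Finset.univ.image w) ?_ ?_ ?_
      · rw [Finset.card_image_of_injective _ hwinj, Finset.card_univ, Fintype.card_fin]
      · intro x hx
        rw [Finset.mem_image] at hx
        obtain ⟨s, -, rfl⟩ := hx
        have hs3 : ((s : ℕ) : ℝ) ≤ 3 := by exact_mod_cast Nat.lt_succ_iff.mp s.isLt
        have hs0 : (0 : ℝ) ≤ ((s : ℕ) : ℝ) := by positivity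
        obtain ⟨h1, h2, h3, h4⟩ := hw s
        exact ⟨h1, h2, by norm_num; linarith, by norm_num; linarith⟩
      · intro x hx y hy hfe hge
        rw [Finset.mem_image] at hx hy
        obtain ⟨s, -, rfl⟩ := hx
        obtain ⟨s', -, rfl⟩ := hy
        have h1 := hw s
        have h2 := hw s'
        rw [hge] at h1
        have e1 : ((s : ℕ) : ℝ) < (s' : ℕ) + 1 := by linarith [h1.2.2.1, h2.2.2.2]
        have e2 : ((s' : ℕ) : ℝ) < (s : ℕ) + 1 := by linarith [h1.2.2.2, h2.2.2.1]
        have e1' : (s : ℕ) < (s' : ℕ) + 1 := by exact_mod_cast e1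
        have e2' : (s' : ℕ) < (s : ℕ) + 1 := by exact_mod_cast e2
        exact congrArg w (Fin.ext (by omega))
    · -- rows 0 and 1 only
      push_neg at hhigh
      set T0 : Finset ℕ := S.filter (fun u => g u < 7) with hT0
      set T1 : Finset ℕ := S.filter (fun u => 7 ≤ g u) with hT1
      have hsub : S ⊆ T0 ∪ T1 := by
        intro u hu
        rcases lt_or_ge (g u) 7 with h | h
        · exact Finset.mem_union_left _ (Finset.mem_filter.mpr ⟨hu, h⟩)
        · exact Finset.mem_union_right _ (Finset.mem_filter.mpr ⟨hu, h⟩)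
      have hcards : 7 ≤ T0.card + T1.card := by
        calc 7 = S.card := hScard.symm
        _ ≤ (T0 ∪ T1).card := Finset.card_le_card hsub
        _ ≤ T0.card + T1.card := Finset.card_union_le _ _
      rcases (by omega : 4 ≤ T0.card ∨ 4 ≤ T1.card) with hc | hc
      · refine hdone 0 (by norm_num) T0 hc ?_ ?_
        · intro u hu
          rw [hT0, Finset.mem_filter] at hu
          obtain ⟨h1, h2⟩ := hSmem u hu.1
          exact ⟨h1, h2, by norm_num; exact (hgb u h2).1, by norm_num; exact hu.2⟩
        · intro x hx y hy hfe hge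
          rw [hT0, Finset.mem_filter] at hx hy
          exact hSfinj x hx.1 y hy.1 hfe
      · refine hdone 1 (by norm_num) T1 hc ?_ ?_
        · intro u hu
          rw [hT1, Finset.mem_filter] at hu
          obtain ⟨h1, h2⟩ := hSmem u hu.1
          exact ⟨h1, h2, by norm_num; exact hu.2, by norm_num; linarith [hhigh u hu.1]⟩
        · intro x hx y hy hfe hge
          rw [hT1, Finset.mem_filter] at hx hy
          exact hSfinj x hx.1 y hy.1 hfe
  · -- rows 1 and 2 only
    push_neg at hlow
    set T1 : Finset ℕ := S.filter (fun u => g u < 14) with hT1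
    set T2 : Finset ℕ := S.filter (fun u => 14 ≤ g u) with hT2
    have hsub : S ⊆ T1 ∪ T2 := by
      intro u hu
      rcases lt_or_ge (g u) 14 with h | h
      · exact Finset.mem_union_left _ (Finset.mem_filter.mpr ⟨hu, h⟩)
      · exact Finset.mem_union_right _ (Finset.mem_filter.mpr ⟨hu, h⟩)
    have hcards : 7 ≤ T1.card + T2.card := by
      calc 7 = S.card := hScard.symm
      _ ≤ (T1 ∪ T2).card := Finset.card_le_card hsub
      _ ≤ T1.card + T2.card := Finset.card_union_le _ _
    rcases (by omega : 4 ≤ T1.card ∨ 4 ≤ T2.card) with hc | hc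
    · refine hdone 1 (by norm_num) T1 hc ?_ ?_
      · intro u hu
        rw [hT1, Finset.mem_filter] at hu
        obtain ⟨h1, h2⟩ := hSmem u hu.1
        exact ⟨h1, h2, by norm_num; exact hlow u hu.1, by norm_num; exact hu.2⟩
      · intro x hx y hy hfe hge
        rw [hT1, Finset.mem_filter] at hx hy
        exact hSfinj x hx.1 y hy.1 hfe
    · refine hdone 2 (by norm_num) T2 hc ?_ ?_
      · intro u hu
        rw [hT2, Finset.mem_filter] at hu
        obtain ⟨h1, h2⟩ := hSmem u hu.1
        exact ⟨h1, h2, by norm_num; exact hu.2, by norm_num; linarith [(hgb u h2).2]⟩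
      · intro x hx y hy hfe hge
        rw [hT2, Finset.mem_filter] at hx hy
        exact hSfinj x hx.1 y hy.1 hfe
end RowsOfSeven

lemma cross_up (f g : ℕ → ℝ) (m : ℕ)
    (hf : ∀ i, i < m → |f (i+1) - f i| ≤ 1)
    (hg : ∀ i, i < m → |g (i+1) - g i| ≤ 1)
    (hfb : ∀ i, i < m → f i < 21)
    (hgb : ∀ i, i < m → 0 ≤ g i ∧ g i < 21)
    (hf0 : f 0 < 14) (hfm : 21 ≤ f m) :
    ∃ r : ℕ, r < 3 ∧ ∃ T : Finset ℕ, 4 ≤ T.card ∧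
      (∀ u ∈ T, u < m ∧ 14 ≤ f u ∧ f u < 14 + 7 ∧
        7 * (r : ℝ) ≤ g u ∧ g u < 7 * (r : ℝ) + 7) ∧
      (∀ u ∈ T, ∀ v ∈ T, f u = f v → g u = g v → u = v) := by
  have hstep : ∀ i, 0 ≤ i → i < m → |f (i+1) - f i| ≤ 1 := fun i _ h => hf i h
  obtain ⟨i0, -, hi0m, -, hi0v, hi0max⟩ :=
    exists_last_below f 0 m 14 hstep hf0 (by linarith) (Nat.zero_le m)
  have hfcol : ∀ i, i0 < i → i < m → (14:ℝ) ≤ f i ∧ f i < 14 + 7 := by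
    intro i h1 h2
    refine ⟨?_, by linarith [hfb i h2]⟩
    by_contra h
    push_neg at h
    have := hi0max i (Nat.zero_le i) h2 h
    omega
  have hts : ∀ s : Fin 7, ∃ u, i0 < u ∧ u < m ∧ 14 + ((s:ℕ):ℝ) ≤ f u ∧
      f u < 14 + ((s:ℕ):ℝ) + 1 := by
    intro s
    have hs0 : (0 : ℝ) ≤ ((s : ℕ) : ℝ) := by positivity
    have hs6 : ((s : ℕ) : ℝ) ≤ 6 := by exact_mod_cast Nat.lt_succ_iff.mp s.isLt
    obtain ⟨u, -, hum, hv1, hv2, humax⟩ :=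
      exists_last_below f 0 m (15 + ((s:ℕ):ℝ)) hstep (by linarith) (by linarith) (Nat.zero_le m)
    have h1 : i0 ≤ u := humax i0 (Nat.zero_le _) hi0m (by linarith)
    have h2 : i0 ≠ u := by intro h; rw [← h] at hv1; linarith
    exact ⟨u, lt_of_le_of_ne h1 h2, hum, by linarith, by linarith⟩
  choose t htp using hts
  exact rows_of_seven f g m i0 14 hg hgb hfcol t htp

lemma cross_down (f g : ℕ → ℝ) (m : ℕ)
    (hf : ∀ i, i < m → |f (i+1) - f i| ≤ 1)
    (hg : ∀ i, i < m → |g (i+1) - g i| ≤ 1)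
    (hfb : ∀ i, i < m → 0 ≤ f i)
    (hgb : ∀ i, i < m → 0 ≤ g i ∧ g i < 21)
    (hf0 : 7 ≤ f 0) (hfm : f m < 0) :
    ∃ r : ℕ, r < 3 ∧ ∃ T : Finset ℕ, 4 ≤ T.card ∧
      (∀ u ∈ T, u < m ∧ (0:ℝ) ≤ f u ∧ f u < 0 + 7 ∧
        7 * (r : ℝ) ≤ g u ∧ g u < 7 * (r : ℝ) + 7) ∧
      (∀ u ∈ T, ∀ v ∈ T, f u = f v → g u = g v → u = v) := by
  have hstep : ∀ i, 0 ≤ i → i < m → |f (i+1) - f i| ≤ 1 := fun i _ h => hf i h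
  obtain ⟨i0, -, hi0m, hi0v, -, hi0max⟩ :=
    exists_last_above f 0 m 7 hstep hf0 (by linarith) (Nat.zero_le m)
  have hfcol : ∀ i, i0 < i → i < m → (0:ℝ) ≤ f i ∧ f i < 0 + 7 := by
    intro i h1 h2
    refine ⟨hfb i h2, ?_⟩
    by_contra h
    push_neg at h
    have := hi0max i (Nat.zero_le i) h2 (by linarith)
    omega
  have hts : ∀ s : Fin 7, ∃ u, i0 < u ∧ u < m ∧ (0:ℝ) + ((s:ℕ):ℝ) ≤ f u ∧
      f u < 0 + ((s:ℕ):ℝ) + 1 := by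
    intro s
    have hs0 : (0 : ℝ) ≤ ((s : ℕ) : ℝ) := by positivity
    have hs6 : ((s : ℕ) : ℝ) ≤ 6 := by exact_mod_cast Nat.lt_succ_iff.mp s.isLt
    obtain ⟨u, -, hum, hv1, hv2, humax⟩ :=
      exists_last_above f 0 m ((s:ℕ):ℝ) hstep (by linarith) (by linarith) (Nat.zero_le m)
    have h1 : i0 ≤ u := humax i0 (Nat.zero_le _) hi0m (by linarith)
    have h2 : i0 ≠ u := by intro h; rw [← h] at hv2; linarith
    exact ⟨u, lt_of_le_of_ne h1 h2, hum, by linarith, by linarith⟩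
  choose t htp using hts
  exact rows_of_seven f g m i0 0 hg hgb hfcol t htp

lemma abs_coord_le_dist (u v : EuclideanSpace ℝ (Fin 2)) (j : Fin 2) :
    |u j - v j| ≤ dist u v := by
  rw [EuclideanSpace.dist_eq]
  rw [show |u j - v j| = Real.sqrt ((u j - v j) ^ 2) from (Real.sqrt_sq_eq_abs _).symm]
  apply Real.sqrt_le_sqrt
  have : (u j - v j) ^ 2 ≤ ∑ i : Fin 2, dist (u i) (v i) ^ 2 := by
    have he : ∀ i : Fin 2, dist (u i) (v i) ^ 2 = (u i - v i) ^ 2 := by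
      intro i; rw [Real.dist_eq, sq_abs]
    simp only [he]
    exact Finset.single_le_sum (fun i _ => sq_nonneg (u i - v i)) (Finset.mem_univ j)
  exact this

lemma cell1d (u : ℝ) (a : ℤ) (h1 : 7*(a:ℝ) - 7 ≤ u) (h2 : u < 7*(a:ℝ) + 14) :
    ∃ a' : ℤ, |a' - a| ≤ 1 ∧ 7*(a':ℝ) ≤ u ∧ u < 7*(a':ℝ) + 7 := by
  rcases lt_or_ge u (7*(a:ℝ)) with h | h
  · exact ⟨a - 1, by simp, by push_cast; linarith, by push_cast; linarith⟩
  rcases lt_or_ge u (7*(a:ℝ) + 7) with h' | h'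
  · exact ⟨a, by simp, by linarith, by linarith⟩
  · exact ⟨a + 1, by simp, by push_cast; linarith, by push_cast; linarith⟩

open Classical in
lemma finish_case (P : Finset (EuclideanSpace ℝ (Fin 2))) (k m : ℕ)
    (p : ℕ → EuclideanSpace ℝ (Fin 2))
    (hmem : ∀ i ≤ k, p i ∈ P) (hmk : m ≤ k) (a b a' b' : ℤ)
    (ha : |a' - a| ≤ 1) (hb : |b' - b| ≤ 1) (hne : ¬(a' = a ∧ b' = b))
    (T : Finset ℕ) (hcard : 4 ≤ T.card)
    (hTm : ∀ u ∈ T, u < m ∧ p u ∈ cell a' b')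
    (hinj : ∀ u ∈ T, ∀ v ∈ T, p u = p v → u = v) :
    ∃ i ≤ k, ∃ a'' b'' : ℤ, |a'' - a| ≤ 1 ∧ |b'' - b| ≤ 1 ∧ ¬(a'' = a ∧ b'' = b) ∧
      p i ∈ cell a'' b'' ∧ 4 ≤ (P.filter (fun x => x ∈ cell a'' b'')).card := by
  obtain ⟨u0, hu0⟩ := Finset.card_pos.mp (by omega : 0 < T.card)
  refine ⟨u0, by have := (hTm u0 hu0).1; omega, a', b', ha, hb, hne, (hTm u0 hu0).2, ?_⟩
  have h1 : T.card = (T.image p).card :=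
    (Finset.card_image_of_injOn (fun u hu v hv h => hinj u hu v hv h)).symm
  have h2 : T.image p ⊆ P.filter (fun z => z ∈ cell a' b') := by
    intro z hz
    obtain ⟨u, hu, rfl⟩ := Finset.mem_image.mp hz
    exact Finset.mem_filter.mpr ⟨hmem u (by have := (hTm u hu).1; omega), (hTm u hu).2⟩
  calc (4:ℕ) ≤ T.card := hcard
  _ = (T.image p).card := h1
  _ ≤ _ := Finset.card_le_card h2

open Classical in
/-- Lay a grid of semi-open cells of side length 7 over a finite point set
`P` and call a cell full if it contains at least 4 points of `P`.  Any path in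
`UDG(P)` (consecutive points at distance ≤ 1) that begins at a point in a cell `C`
and ends outside the 3×3 block centered at `C` must pass through a point lying in a
full cell of `C`'s block other than `C` itself. -/
theorem path_exits_block_through_full_cell
    (P : Finset (EuclideanSpace ℝ (Fin 2))) (a b : ℤ)
    (k : ℕ) (p : ℕ → EuclideanSpace ℝ (Fin 2))
    (hmem : ∀ i ≤ k, p i ∈ P)
    (hstep : ∀ i < k, dist (p i) (p (i + 1)) ≤ 1)
    (hstart : p 0 ∈ cell a b)
    (hend : ∀ a' b' : ℤ, |a' - a| ≤ 1 → |b' - b| ≤ 1 → p k ∉ cell a' b') :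
    ∃ i ≤ k, ∃ a' b' : ℤ, |a' - a| ≤ 1 ∧ |b' - b| ≤ 1 ∧ ¬(a' = a ∧ b' = b) ∧
      p i ∈ cell a' b' ∧ 4 ≤ (P.filter (fun x => x ∈ cell a' b')).card := by
  classical
  set x : ℕ → ℝ := fun i => p i 0 - (7 * (a : ℝ) - 7) with hxdef
  set y : ℕ → ℝ := fun i => p i 1 - (7 * (b : ℝ) - 7) with hydef
  simp only [cell, Set.mem_setOf_eq] at hstart
  have hx0 : 7 ≤ x 0 ∧ x 0 < 14 := by
    constructor <;> (simp only [hxdef]; linarith [hstart.1, hstart.2.1])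
  have hy0 : 7 ≤ y 0 ∧ y 0 < 14 := by
    constructor <;> (simp only [hydef]; linarith [hstart.2.2.1, hstart.2.2.2])
  -- the end point is not in the block
  have hkout : ¬(0 ≤ x k ∧ x k < 21 ∧ 0 ≤ y k ∧ y k < 21) := by
    rintro ⟨h1, h2, h3, h4⟩
    simp only [hxdef] at h1 h2
    simp only [hydef] at h3 h4
    obtain ⟨a', ha', ha1, ha2⟩ := cell1d (p k 0) a (by linarith) (by linarith)
    obtain ⟨b', hb', hb1, hb2⟩ := cell1d (p k 1) b (by linarith) (by linarith)
    exact hend a' b' ha' hb' ⟨ha1, ha2, hb1, hb2⟩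
  have hEx : ∃ i, ¬(0 ≤ x i ∧ x i < 21 ∧ 0 ≤ y i ∧ y i < 21) := ⟨k, hkout⟩
  set m := Nat.find hEx with hmdef
  have hmk : m ≤ k := Nat.find_min' hEx hkout
  have hbl : ∀ i, i < m → 0 ≤ x i ∧ x i < 21 ∧ 0 ≤ y i ∧ y i < 21 := by
    intro i hi
    have := Nat.find_min hEx hi
    exact not_not.mp this
  have hout : ¬(0 ≤ x m ∧ x m < 21 ∧ 0 ≤ y m ∧ y m < 21) := Nat.find_spec hEx
  -- step bounds
  have hxs : ∀ i, i < m → |x (i+1) - x i| ≤ 1 := by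
    intro i hi
    simp only [hxdef]
    have h := abs_coord_le_dist (p (i+1)) (p i) 0
    have h2 := hstep i (lt_of_lt_of_le hi hmk)
    rw [dist_comm] at h2
    calc |p (i+1) 0 - (7*(a:ℝ) - 7) - (p i 0 - (7*(a:ℝ) - 7))| = |p (i+1) 0 - p i 0| := by
          ring_nf
    _ ≤ dist (p (i+1)) (p i) := h
    _ ≤ 1 := h2
  have hys : ∀ i, i < m → |y (i+1) - y i| ≤ 1 := by
    intro i hi
    simp only [hydef]
    have h := abs_coord_le_dist (p (i+1)) (p i) 1
    have h2 := hstep i (lt_of_lt_of_le hi hmk)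
    rw [dist_comm] at h2
    calc |p (i+1) 1 - (7*(b:ℝ) - 7) - (p i 1 - (7*(b:ℝ) - 7))| = |p (i+1) 1 - p i 1| := by
          ring_nf
    _ ≤ dist (p (i+1)) (p i) := h
    _ ≤ 1 := h2
  -- injectivity transfer
  have hpinj : ∀ (T : Finset ℕ),
      (∀ u ∈ T, ∀ v ∈ T, x u = x v → y u = y v → u = v) →
      ∀ u ∈ T, ∀ v ∈ T, p u = p v → u = v := by
    intro T h u hu v hv hpe
    refine h u hu v hv ?_ ?_
    · simp only [hxdef]; rw [show p u 0 = p v 0 from congrArg (fun z => z 0) hpe]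
    · simp only [hydef]; rw [show p u 1 = p v 1 from congrArg (fun z => z 1) hpe]
  rcases lt_or_ge (x m) 0 with hxm | hxm
  · -- exits left : column a - 1
    obtain ⟨r, hr, T, hTc, hTmem, hTinj⟩ := cross_down x y m hxs hys
      (fun i hi => (hbl i hi).1) (fun i hi => ⟨(hbl i hi).2.2.1, (hbl i hi).2.2.2⟩)
      hx0.1 hxm
    refine finish_case P k m p hmem hmk a b (a - 1) (b - 1 + r)
      (by simp) (by rw [abs_le]; omega) (by rintro ⟨h, -⟩; omega) T hTc ?_ (hpinj T hTinj)
    intro u hu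
    obtain ⟨h1, h2, h3, h4, h5⟩ := hTmem u hu
    simp only [hxdef] at h2 h3
    simp only [hydef] at h4 h5
    exact ⟨h1, by push_cast; linarith, by push_cast; linarith,
      by push_cast; linarith, by push_cast; linarith⟩
  rcases le_or_gt 21 (x m) with hxm' | hxm'
  · -- exits right : column a + 1
    obtain ⟨r, hr, T, hTc, hTmem, hTinj⟩ := cross_up x y m hxs hys
      (fun i hi => (hbl i hi).2.1) (fun i hi => ⟨(hbl i hi).2.2.1, (hbl i hi).2.2.2⟩)
      hx0.2 hxm'
    refine finish_case P k m p hmem hmk a b (a + 1) (b - 1 + r)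
      (by simp) (by rw [abs_le]; omega) (by rintro ⟨h, -⟩; omega) T hTc ?_ (hpinj T hTinj)
    intro u hu
    obtain ⟨h1, h2, h3, h4, h5⟩ := hTmem u hu
    simp only [hxdef] at h2 h3
    simp only [hydef] at h4 h5
    exact ⟨h1, by push_cast; linarith, by push_cast; linarith,
      by push_cast; linarith, by push_cast; linarith⟩
  rcases lt_or_ge (y m) 0 with hym | hym
  · -- exits bottom : row b - 1
    obtain ⟨r, hr, T, hTc, hTmem, hTinj⟩ := cross_down y x m hys hxs
      (fun i hi => (hbl i hi).2.2.1) (fun i hi => ⟨(hbl i hi).1, (hbl i hi).2.1⟩)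
      hy0.1 hym
    refine finish_case P k m p hmem hmk a b (a - 1 + r) (b - 1)
      (by rw [abs_le]; omega) (by simp) (by rintro ⟨-, h⟩; omega) T hTc ?_ (hpinj T (fun u hu v hv h1 h2 => hTinj u hu v hv h2 h1))
    intro u hu
    obtain ⟨h1, h2, h3, h4, h5⟩ := hTmem u hu
    simp only [hydef] at h2 h3
    simp only [hxdef] at h4 h5
    exact ⟨h1, by push_cast; linarith, by push_cast; linarith,
      by push_cast; linarith, by push_cast; linarith⟩
  rcases le_or_gt 21 (y m) with hym' | hym'
  · -- exits top : row b + 1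
    obtain ⟨r, hr, T, hTc, hTmem, hTinj⟩ := cross_up y x m hys hxs
      (fun i hi => (hbl i hi).2.2.2) (fun i hi => ⟨(hbl i hi).1, (hbl i hi).2.1⟩)
      hy0.2 hym'
    refine finish_case P k m p hmem hmk a b (a - 1 + r) (b + 1)
      (by rw [abs_le]; omega) (by simp) (by rintro ⟨-, h⟩; omega) T hTc ?_ (hpinj T (fun u hu v hv h1 h2 => hTinj u hu v hv h2 h1))
    intro u hu
    obtain ⟨h1, h2, h3, h4, h5⟩ := hTmem u hu
    simp only [hydef] at h2 h3
    simp only [hxdef] at h4 h5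
    exact ⟨h1, by push_cast; linarith, by push_cast; linarith,
      by push_cast; linarith, by push_cast; linarith⟩
  · exact absurd ⟨by linarith, by linarith, by linarith, by linarith⟩ hout
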